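/- Every formula derivable in the proof system K4^{∇•} is true at every world of every transitive Kripke model. In particular, for all formulas φ, ψ, ψ_1, ψ_2 of L(∇,•), the four schemas A4-1: Δφ → ΔΔφ; A4-2: Δφ → ∘(ψ → Δφ); A4-3: (•ψ_1 ∧ Δφ ∧ ∘(¬ψ_1→φ)) → Δ∘(¬ψ_2→φ); and A4-4: (•ψ_1 ∧ Δφ ∧ ∘(¬ψ_1→φ)) → ∘(¬ψ_1 → ∘(¬ψ_2→φ)) are valid on the class of transitive Kripke models. -/

import Mathlib

inductive Form : Type
  | atom : Nat → Form
  | neg : Form → Form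
  | and : Form → Form → Form
  | nabla : Form → Form
  | bull : Form → Form

namespace Form
def imp (φ ψ : Form) : Form := neg (and φ (neg ψ))
def orf (φ ψ : Form) : Form := neg (and (neg φ) (neg ψ))
def ifff (φ ψ : Form) : Form := and (imp φ ψ) (imp ψ φ)
def delta (φ : Form) : Form := neg (nabla φ)
def circ (φ : Form) : Form := neg (bull φ)
end Form

structure Model (W : Type) where
  R : W → W → Prop
  V : Nat → W → Prop

def sat {W : Type} (M : Model W) : W → Form → Prop
  | s, .atom n => M.V n s
  | s, .neg φ => ¬ sat M s φ
  | s, .and φ ψ => sat M s φ ∧ sat M s ψ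
  | s, .nabla φ => ∃ t u, M.R s t ∧ M.R s u ∧ sat M t φ ∧ ¬ sat M u φ
  | s, .bull φ => sat M s φ ∧ ∃ t, M.R s t ∧ ¬ sat M t φ

/-- Boolean evaluation treating atoms, `∇φ` and `•φ` as propositional atoms;
used to express "instance of a propositional tautology". -/
def evalT (v : Form → Bool) : Form → Bool
  | .neg φ => !(evalT v φ)
  | .and φ ψ => evalT v φ && evalT v ψ
  | φ => v φ

/-- `φ` is an instance of a propositional tautology. -/
def Taut (φ : Form) : Prop := ∀ v : Form → Bool, evalT v φ = true

/-- Derivability in the minimal system `K^{∇•}`. -/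
inductive Prov : Form → Prop
  | a0 : ∀ φ, Taut φ → Prov φ
  | a1 : ∀ φ, Prov (Form.imp (.bull φ) φ)
  | a2 : ∀ φ, Prov (Form.ifff (.nabla φ) (.nabla (.neg φ)))
  | a3 : ∀ φ ψ, Prov (Form.imp (.and (.bull (Form.imp ψ φ)) φ) (.bull φ))
  | a4 : ∀ φ ψ, Prov (Form.imp (.nabla (.and φ ψ)) (Form.orf (.nabla φ) (.nabla ψ)))
  | a5 : ∀ φ ψ, Prov (Form.imp (.bull (.and φ ψ)) (Form.orf (.bull φ) (.bull ψ)))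
  | a6 : ∀ φ, Prov (Form.imp (.nabla φ) (Form.orf (.bull φ) (.bull (.neg φ))))
  | a7 : ∀ φ ψ χ, Prov (Form.imp (.and (.bull (Form.imp φ ψ)) (.bull (Form.imp (.neg φ) χ))) (.nabla φ))
  | r1 : ∀ φ, Prov φ → Prov (Form.delta φ)
  | r2 : ∀ φ, Prov φ → Prov (Form.circ φ)
  | r3 : ∀ φ ψ, Prov (Form.ifff φ ψ) → Prov (Form.ifff (Form.delta φ) (Form.delta ψ))
  | r4 : ∀ φ ψ, Prov (Form.ifff φ ψ) → Prov (Form.ifff (Form.circ φ) (Form.circ ψ))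
  | mp : ∀ φ ψ, Prov (Form.imp φ ψ) → Prov φ → Prov ψ

/-- Axiom A4-1: `Δφ → ΔΔφ`. -/
def ax41 (φ : Form) : Form := Form.imp (Form.delta φ) (Form.delta (Form.delta φ))

/-- Axiom A4-2: `Δφ → ∘(ψ → Δφ)`. -/
def ax42 (φ ψ : Form) : Form :=
  Form.imp (Form.delta φ) (Form.circ (Form.imp ψ (Form.delta φ)))

/-- Axiom A4-3: `(•ψ₁ ∧ Δφ ∧ ∘(¬ψ₁→φ)) → Δ∘(¬ψ₂→φ)`. -/
def ax43 (φ ψ₁ ψ₂ : Form) : Form :=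
  Form.imp
    (.and (.bull ψ₁) (.and (Form.delta φ) (Form.circ (Form.imp (.neg ψ₁) φ))))
    (Form.delta (Form.circ (Form.imp (.neg ψ₂) φ)))

/-- Axiom A4-4: `(•ψ₁ ∧ Δφ ∧ ∘(¬ψ₁→φ)) → ∘(¬ψ₁ → ∘(¬ψ₂→φ))`. -/
def ax44 (φ ψ₁ ψ₂ : Form) : Form :=
  Form.imp
    (.and (.bull ψ₁) (.and (Form.delta φ) (Form.circ (Form.imp (.neg ψ₁) φ))))
    (Form.circ (Form.imp (.neg ψ₁) (Form.circ (Form.imp (.neg ψ₂) φ))))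

/-- Derivability in the system `K4^{∇•}` = `K^{∇•}` + A4-1 + A4-2 + A4-3 + A4-4. -/
inductive Prov4 : Form → Prop
  | a0 : ∀ φ, Taut φ → Prov4 φ
  | a1 : ∀ φ, Prov4 (Form.imp (.bull φ) φ)
  | a2 : ∀ φ, Prov4 (Form.ifff (.nabla φ) (.nabla (.neg φ)))
  | a3 : ∀ φ ψ, Prov4 (Form.imp (.and (.bull (Form.imp ψ φ)) φ) (.bull φ))
  | a4 : ∀ φ ψ, Prov4 (Form.imp (.nabla (.and φ ψ)) (Form.orf (.nabla φ) (.nabla ψ)))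
  | a5 : ∀ φ ψ, Prov4 (Form.imp (.bull (.and φ ψ)) (Form.orf (.bull φ) (.bull ψ)))
  | a6 : ∀ φ, Prov4 (Form.imp (.nabla φ) (Form.orf (.bull φ) (.bull (.neg φ))))
  | a7 : ∀ φ ψ χ, Prov4 (Form.imp (.and (.bull (Form.imp φ ψ)) (.bull (Form.imp (.neg φ) χ))) (.nabla φ))
  | a41 : ∀ φ, Prov4 (ax41 φ)
  | a42 : ∀ φ ψ, Prov4 (ax42 φ ψ)
  | a43 : ∀ φ ψ₁ ψ₂, Prov4 (ax43 φ ψ₁ ψ₂)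
  | a44 : ∀ φ ψ₁ ψ₂, Prov4 (ax44 φ ψ₁ ψ₂)
  | r1 : ∀ φ, Prov4 φ → Prov4 (Form.delta φ)
  | r2 : ∀ φ, Prov4 φ → Prov4 (Form.circ φ)
  | r3 : ∀ φ ψ, Prov4 (Form.ifff φ ψ) → Prov4 (Form.ifff (Form.delta φ) (Form.delta ψ))
  | r4 : ∀ φ ψ, Prov4 (Form.ifff φ ψ) → Prov4 (Form.ifff (Form.circ φ) (Form.circ ψ))
  | mp : ∀ φ ψ, Prov4 (Form.imp φ ψ) → Prov4 φ → Prov4 ψ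

open Classical

@[simp] lemma sat_imp {W : Type} (M : Model W) (s : W) (φ ψ : Form) :
    sat M s (Form.imp φ ψ) ↔ (sat M s φ → sat M s ψ) := by
  simp only [Form.imp, sat]; tauto

@[simp] lemma sat_orf {W : Type} (M : Model W) (s : W) (φ ψ : Form) :
    sat M s (Form.orf φ ψ) ↔ (sat M s φ ∨ sat M s ψ) := by
  simp only [Form.orf, sat]; tauto

@[simp] lemma sat_ifff {W : Type} (M : Model W) (s : W) (φ ψ : Form) :
    sat M s (Form.ifff φ ψ) ↔ (sat M s φ ↔ sat M s ψ) := by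
  simp only [Form.ifff, Form.imp, sat]; tauto

@[simp] lemma sat_delta {W : Type} (M : Model W) (s : W) (φ : Form) :
    sat M s (Form.delta φ) ↔ ¬ sat M s (Form.nabla φ) := by
  simp [Form.delta, sat]

@[simp] lemma sat_circ {W : Type} (M : Model W) (s : W) (φ : Form) :
    sat M s (Form.circ φ) ↔ ¬ sat M s (Form.bull φ) := by
  simp [Form.circ, sat]

lemma evalT_sat {W : Type} (M : Model W) (s : W) :
    ∀ φ : Form, evalT (fun ψ => decide (sat M s ψ)) φ = decide (sat M s φ) := by
  intro φ
  induction φ with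
  | neg φ ih => simp [evalT, sat, ih]; by_cases h : sat M s φ <;> simp [h]
  | and φ ψ ih1 ih2 =>
    simp [evalT, sat, ih1, ih2]; by_cases h1 : sat M s φ <;> by_cases h2 : sat M s ψ <;> simp [h1, h2]
  | atom n => rfl
  | nabla φ _ => rfl
  | bull φ _ => rfl

lemma taut_sound {W : Type} (M : Model W) (s : W) {φ : Form} (h : Taut φ) :
    sat M s φ := by
  have := h (fun ψ => decide (sat M s ψ))
  rw [evalT_sat] at this
  exact of_decide_eq_true this

/-- Under the common hypotheses of A4-3/A4-4, every successor satisfies φ. -/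
lemma key {W : Type} (M : Model W) (s : W)
    (hb : sat M s (Form.bull ψ₁))
    (hd : sat M s (Form.delta φ))
    (hc : sat M s (Form.circ (Form.imp (Form.neg ψ₁) φ))) :
    ∀ t, M.R s t → sat M t φ := by
  intro t hst
  by_contra hφ
  have hb' : sat M s ψ₁ ∧ ∃ u, M.R s u ∧ ¬ sat M u ψ₁ := hb
  obtain ⟨hs1, t₀, hst₀, ht₀⟩ := hb'
  have hd' : ¬ ∃ a b, M.R s a ∧ M.R s b ∧ sat M a φ ∧ ¬ sat M b φ := hd
  have ht₀φ : ¬ sat M t₀ φ := fun h => hd' ⟨t₀, t, hst₀, hst, h, hφ⟩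
  have hc' : ¬ (sat M s (Form.imp (.neg ψ₁) φ) ∧
      ∃ u, M.R s u ∧ ¬ sat M u (Form.imp (.neg ψ₁) φ)) := hc
  apply hc'
  refine ⟨?_, t₀, hst₀, ?_⟩
  · show ¬ (¬ sat M s ψ₁ ∧ ¬ sat M s φ)
    exact fun h => h.1 hs1
  · show ¬ ¬ (¬ sat M t₀ ψ₁ ∧ ¬ sat M t₀ φ)
    exact fun h => h ⟨ht₀, ht₀φ⟩

theorem ax_sound {W : Type} (M : Model W)
    (htr : ∀ a b c : W, M.R a b → M.R b c → M.R a c) (s : W) (φ ψ ψ₁ ψ₂ : Form) :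
    sat M s (ax41 φ) ∧ sat M s (ax42 φ ψ) ∧
    sat M s (ax43 φ ψ₁ ψ₂) ∧ sat M s (ax44 φ ψ₁ ψ₂) := by
  refine ⟨?_, ?_, ?_, ?_⟩
  · -- A4-1
    rw [ax41, sat_imp]
    intro hd
    simp only [sat_delta, sat] at hd ⊢
    rintro ⟨t, u, hst, hsu, -, hu⟩
    simp only [sat_delta, not_not, sat] at hu
    obtain ⟨a, b, hua, hub, ha, hb⟩ := hu
    exact hd ⟨a, b, htr _ _ _ hsu hua, htr _ _ _ hsu hub, ha, hb⟩
  · -- A4-2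
    rw [ax42, sat_imp]
    intro hd
    simp only [sat_circ, sat, sat_imp, sat_delta] at hd ⊢
    rintro ⟨-, t, hst, ht⟩
    apply ht
    intro h
    rintro ⟨a, b, hta, htb, ha, hb⟩
    exact hd ⟨a, b, htr _ _ _ hst hta, htr _ _ _ hst htb, ha, hb⟩
  · -- A4-3
    rw [ax43, sat_imp]
    rintro ⟨hb, hd, hc⟩
    have hall := key M s hb hd hc
    simp only [sat_delta, sat]
    rintro ⟨t, u, hst, hsu, -, hu⟩
    simp only [sat_circ, not_not, sat, sat_imp] at hu
    obtain ⟨-, v, huv, hv⟩ := hu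
    exact hv fun _ => hall v (htr _ _ _ hsu huv)
  · -- A4-4
    rw [ax44, sat_imp]
    rintro ⟨hb, hd, hc⟩
    have hall := key M s hb hd hc
    simp only [sat_circ, sat, sat_imp]
    rintro ⟨-, t, hst, ht⟩
    apply ht
    intro h
    rintro ⟨-, v, htv, hv⟩
    exact hv fun _ => hall v (htr _ _ _ hst htv)

theorem stmt14 :
    (∀ φ : Form, Prov4 φ →
      ∀ (W : Type) [Nonempty W] (M : Model W),
        (∀ a b c : W, M.R a b → M.R b c → M.R a c) → ∀ s : W, sat M s φ) ∧
    (∀ (W : Type) [Nonempty W] (M : Model W),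
      (∀ a b c : W, M.R a b → M.R b c → M.R a c) →
        ∀ (s : W) (φ ψ ψ₁ ψ₂ : Form),
          sat M s (ax41 φ) ∧ sat M s (ax42 φ ψ) ∧
          sat M s (ax43 φ ψ₁ ψ₂) ∧ sat M s (ax44 φ ψ₁ ψ₂)) := by
  constructor
  · intro φ h W _ M htr
    induction h with
    | a0 φ ht => intro s; exact taut_sound M s ht
    | a1 φ => intro s; rw [sat_imp]; exact fun h => h.1
    | a2 φ =>
        intro s; rw [sat_ifff]
        constructor
        · rintro ⟨t, u, hst, hsu, ht, hu⟩
          exact ⟨u, t, hsu, hst, by simpa [sat] using hu, by simp [sat, ht]⟩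
        · rintro ⟨t, u, hst, hsu, ht, hu⟩
          simp only [sat, not_not] at ht hu
          exact ⟨u, t, hsu, hst, hu, ht⟩
    | a3 φ ψ =>
        intro s
        rw [sat_imp]
        rintro ⟨⟨-, t, hst, ht⟩, hφ⟩
        rw [sat_imp] at ht
        push_neg at ht
        exact ⟨hφ, t, hst, ht.2⟩
    | a4 φ ψ =>
        intro s
        rw [sat_imp, sat_orf]
        rintro ⟨t, u, hst, hsu, ht, hu⟩
        simp only [sat] at ht hu
        push_neg at hu
        by_cases h : sat M u φ
        · exact Or.inr ⟨t, u, hst, hsu, ht.2, hu h⟩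
        · exact Or.inl ⟨t, u, hst, hsu, ht.1, h⟩
    | a5 φ ψ =>
        intro s
        rw [sat_imp, sat_orf]
        rintro ⟨hs, t, hst, ht⟩
        simp only [sat] at hs ht
        push_neg at ht
        by_cases h : sat M t φ
        · exact Or.inr ⟨hs.2, t, hst, ht h⟩
        · exact Or.inl ⟨hs.1, t, hst, h⟩
    | a6 φ =>
        intro s
        rw [sat_imp, sat_orf]
        rintro ⟨t, u, hst, hsu, ht, hu⟩
        by_cases h : sat M s φ
        · exact Or.inl ⟨h, u, hsu, hu⟩
        · exact Or.inr ⟨by simpa [sat] using h, t, hst, by simp [sat, ht]⟩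
    | a7 φ ψ χ =>
        intro s
        rw [sat_imp]
        rintro ⟨⟨-, t, hst, ht⟩, ⟨-, u, hsu, hu⟩⟩
        rw [sat_imp] at ht hu
        push_neg at ht hu
        exact ⟨t, u, hst, hsu, ht.1, by simpa [sat] using hu.1⟩
    | r1 φ _ ih =>
        intro s
        rw [sat_delta]
        rintro ⟨t, u, -, -, -, hu⟩
        exact hu (ih u)
    | r2 φ _ ih =>
        intro s
        rw [sat_circ]
        rintro ⟨-, t, -, ht⟩
        exact ht (ih t)
    | r3 φ ψ _ ih =>
        intro s
        have h : ∀ w : W, sat M w φ ↔ sat M w ψ := fun w => (sat_ifff M w φ ψ).1 (ih w)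
        rw [sat_ifff, sat_delta, sat_delta]
        simp only [sat]
        constructor <;> (intro hn; rintro ⟨t, u, hst, hsu, ht, hu⟩)
        · exact hn ⟨t, u, hst, hsu, (h t).2 ht, fun hh => hu ((h u).1 hh)⟩
        · exact hn ⟨t, u, hst, hsu, (h t).1 ht, fun hh => hu ((h u).2 hh)⟩
    | r4 φ ψ _ ih =>
        intro s
        have h : ∀ w : W, sat M w φ ↔ sat M w ψ := fun w => (sat_ifff M w φ ψ).1 (ih w)
        rw [sat_ifff, sat_circ, sat_circ]
        simp only [sat]
        constructor <;> (intro hn; rintro ⟨hs, t, hst, ht⟩)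
        · exact hn ⟨(h s).2 hs, t, hst, fun hh => ht ((h t).1 hh)⟩
        · exact hn ⟨(h s).1 hs, t, hst, fun hh => ht ((h t).2 hh)⟩
    | a41 φ => intro s; exact (ax_sound M htr s φ φ φ φ).1
    | a42 φ ψ => intro s; exact (ax_sound M htr s φ ψ φ φ).2.1
    | a43 φ ψ₁ ψ₂ => intro s; exact (ax_sound M htr s φ φ ψ₁ ψ₂).2.2.1
    | a44 φ ψ₁ ψ₂ => intro s; exact (ax_sound M htr s φ φ ψ₁ ψ₂).2.2.2
    | mp φ ψ _ _ ih1 ih2 =>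
        intro s
        exact (sat_imp M s φ ψ).1 (ih1 s) (ih2 s)
  · intro W _ M htr s φ ψ ψ₁ ψ₂
    exact ax_sound M htr s φ ψ ψ₁ ψ₂
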